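/- Let L be a finite-dimensional complex Lie algebra, carrying its canonical topology as a finite-dimensional complex vector space, let (h, e, f) be an sl₂-triple in L, and let s ∈ L satisfy ⁅h, s⁆ = 0. Then s lies in the closure of the set {φ (s + e) : φ is a Lie algebra automorphism of L}. -/

import Mathlib

open NormedSpace

attribute [local instance] LieRing.ofAssociativeRing

lemma aux_exp_deriv {L : Type*} [LieRing L] [LieAlgebra ℂ L] [FiniteDimensional ℂ L]
    (D : L →ₗ[ℂ] L) (hD : ∀ x y : L, D ⁅x, y⁆ = ⁅D x, y⁆ + ⁅x, D y⁆)
    (s e : L) (hs : D s = 0) (μ : ℂ) (he : D e = μ • e) :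
    ∃ φ : L ≃ₗ⁅ℂ⁆ L, φ s = s ∧ φ e = Complex.exp μ • e := by
  let b := Module.finBasis ℂ L
  letI : NormedAddCommGroup L :=
    NormedAddCommGroup.induced L (Fin (Module.finrank ℂ L) → ℂ)
      b.equivFun.toLinearMap b.equivFun.injective
  letI : NormedSpace ℂ L := NormedSpace.induced ℂ L (Fin (Module.finrank ℂ L) → ℂ)
      b.equivFun.toLinearMap
  letI : CompleteSpace L := FiniteDimensional.complete ℂ L
  letI : NormedAlgebra ℚ (L →L[ℂ] L) := NormedAlgebra.restrictScalars ℚ ℂ (L →L[ℂ] L)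
  set A : L →L[ℂ] L := LinearMap.toContinuousLinearMap D with hA
  have hAapp : ∀ x : L, A x = D x := fun x => rfl
  -- the continuous bilinear bracket
  let B : L →L[ℂ] L →L[ℂ] L :=
    LinearMap.toContinuousLinearMap
      ((LinearMap.toContinuousLinearMap : (L →ₗ[ℂ] L) ≃ₗ[ℂ] (L →L[ℂ] L)).toLinearMap ∘ₗ
        (LieAlgebra.ad ℂ L).toLinearMap)
  have hB : ∀ x y : L, B x y = ⁅x, y⁆ := by
    intro x y
    show LinearMap.toContinuousLinearMap (LieAlgebra.ad ℂ L x) y = ⁅x, y⁆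
    simp [LieAlgebra.ad_apply]
  -- exp commutes with A
  have hcom : ∀ t : ℂ, A * exp (t • A) = exp (t • A) * A := fun t =>
    (((Commute.refl A).smul_right t).exp_right).eq
  -- exp (t•A) ∘ exp (-t•A) = 1
  have hinv : ∀ t : ℂ, exp (t • A) * exp (-t • A) = 1 := by
    intro t
    rw [show (-t • A : L →L[ℂ] L) = -(t • A) by rw [neg_smul],
      ← exp_add_of_commute (((Commute.refl (t • A)).neg_right))]
    simp
  -- multiplicativity
  have key : ∀ t : ℂ, ∀ x y : L, exp (t • A) ⁅x, y⁆ = ⁅exp (t • A) x, exp (t • A) y⁆ := by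
    intro t x y
    set g : ℂ → L := fun u => exp (-u • A) (B (exp (u • A) x) (exp (u • A) y)) with hg
    have hderiv : ∀ u : ℂ, HasDerivAt g 0 u := by
      intro u
      have hu : HasDerivAt (fun u : ℂ => exp (u • A) x) (A (exp (u • A) x)) u := by
        have := (hasDerivAt_exp_smul_const (𝕂 := ℂ) A u).clm_apply (hasDerivAt_const u x)
        simpa [← hcom u, ContinuousLinearMap.mul_apply] using this
      have hv : HasDerivAt (fun u : ℂ => exp (u • A) y) (A (exp (u • A) y)) u := by
        have := (hasDerivAt_exp_smul_const (𝕂 := ℂ) A u).clm_apply (hasDerivAt_const u y)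
        simpa [← hcom u, ContinuousLinearMap.mul_apply] using this
      have hc : HasDerivAt (fun u : ℂ => B (exp (u • A) x)) (B (A (exp (u • A) x))) u :=
        (B.hasFDerivAt.comp_hasDerivAt u hu)
      have hw : HasDerivAt (fun u : ℂ => B (exp (u • A) x) (exp (u • A) y))
          (B (A (exp (u • A) x)) (exp (u • A) y)
            + B (exp (u • A) x) (A (exp (u • A) y))) u := hc.clm_apply hv
      have hE2 : HasDerivAt (fun u : ℂ => exp (-u • A))
          ((-1 : ℂ) • (exp (-u • A) * A)) u := by
        have h1 : HasDerivAt (fun u : ℂ => exp (u • A)) (exp (-u • A) * A) (-u) :=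
          hasDerivAt_exp_smul_const (𝕂 := ℂ) A (-u)
        have h2 : HasDerivAt (fun u : ℂ => -u) (-1) u := (hasDerivAt_id u).neg
        exact h1.scomp u h2
      have htot := hE2.clm_apply hw
      convert htot using 1
      case e'_4 => rfl
      have hAw : A (B (exp (u • A) x) (exp (u • A) y))
          = B (A (exp (u • A) x)) (exp (u • A) y)
            + B (exp (u • A) x) (A (exp (u • A) y)) := by
        simp only [hB, hAapp]; exact hD _ _
      rw [← hAw]
      simp [ContinuousLinearMap.mul_apply]
    have hconst : g t = g 0 := by
      apply is_const_of_fderiv_eq_zero (𝕜 := ℂ) (fun u => (hderiv u).differentiableAt)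
      intro u
      rw [(hderiv u).hasFDerivAt.fderiv]
      ext
      simp
    have hg0 : g 0 = ⁅x, y⁆ := by simp [hg, hB]
    have : exp (t • A) (g t) = exp (t • A) ⁅x, y⁆ := by rw [hconst, hg0]
    rw [hg] at this
    rw [← ContinuousLinearMap.mul_apply (exp (t • A)) (exp (-t • A)), hinv] at this
    simpa [hB] using this.symm
  -- pointwise description of exp
  have happly : ∀ x : L, exp A x = ∑' n : ℕ, ((n.factorial : ℂ)⁻¹) • ((A ^ n) x) := by
    intro x
    rw [exp_eq_tsum ℂ]
    have := (ContinuousLinearMap.apply ℂ L x).map_tsum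
      (expSeries_summable' (𝕂 := ℂ) (x := A))
    simpa using this
  have hexps : exp A s = s := by
    rw [happly, tsum_eq_single 0]
    · simp
    · intro n hn
      obtain ⟨m, rfl⟩ := Nat.exists_eq_succ_of_ne_zero hn
      have hz : (A ^ (m + 1)) s = 0 := by
        rw [pow_succ, ContinuousLinearMap.mul_apply, hAapp, hs, map_zero]
      rw [hz, smul_zero]
  have hpow : ∀ n : ℕ, (A ^ n) e = μ ^ n • e := by
    intro n
    induction n with
    | zero => simp
    | succ m ih =>
      rw [pow_succ, ContinuousLinearMap.mul_apply, hAapp, he, map_smul, ih, smul_smul, pow_succ]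
      ring_nf
  have hexpe : exp A e = Complex.exp μ • e := by
    rw [happly]
    have h1 : ∀ n : ℕ, ((n.factorial : ℂ)⁻¹) • ((A ^ n) e)
        = (((n.factorial : ℂ)⁻¹) * μ ^ n) • e := by
      intro n; rw [hpow, smul_smul]
    rw [tsum_congr h1, Summable.tsum_smul_const (by
      simpa [smul_eq_mul] using expSeries_summable' (𝕂 := ℂ) (x := μ))]
    congr 1
    rw [Complex.exp_eq_exp_ℂ, exp_eq_tsum ℂ]
    simp [smul_eq_mul]
  -- inverses
  have hinv1 : exp A * exp (-A) = 1 := by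
    have := hinv 1; simpa using this
  have hinv2 : exp (-A) * exp A = 1 := by
    have : exp (-(1:ℂ) • A) * exp ((1:ℂ) • A) = 1 := by
      rw [show (-(1:ℂ) • A : L →L[ℂ] L) = -((1:ℂ) • A) by rw [neg_smul],
        ← exp_add_of_commute (((Commute.refl ((1:ℂ) • A)).neg_left))]
      simp
    simpa using this
  have key1 : ∀ x y : L, exp A ⁅x, y⁆ = ⁅exp A x, exp A y⁆ := by
    intro x y
    have := key 1 x y
    simpa using this
  refine ⟨{ toFun := fun x => exp A x
            map_add' := by intros; simp
            map_smul' := by intros; simp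
            map_lie' := by intros; exact key1 _ _
            invFun := fun x => exp (-A) x
            left_inv := by
              intro x
              show exp (-A) (exp A x) = x
              rw [← ContinuousLinearMap.mul_apply, hinv2]
              simp
            right_inv := by
              intro x
              show exp A (exp (-A) x) = x
              rw [← ContinuousLinearMap.mul_apply, hinv1]
              simp }, hexps, hexpe⟩
/-- Part (b) of the lemma on mixed orbits (Section 6.3): if `(h, e, f)` is an
`sl₂`-triple in a finite-dimensional complex Lie algebra (with its canonical topology,
i.e. any Hausdorff vector topology) and `⁅h, s⁆ = 0`, then `s` lies in the closure of
the orbit of `s + e` under Lie algebra automorphisms. -/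
theorem stmt_9 {L : Type*} [LieRing L] [LieAlgebra ℂ L] [FiniteDimensional ℂ L]
    [TopologicalSpace L] [IsTopologicalAddGroup L] [ContinuousSMul ℂ L] [T2Space L]
    (h e f : L) (hhe : ⁅h, e⁆ = (2 : ℂ) • e) (hhf : ⁅h, f⁆ = (-2 : ℂ) • f)
    (hef : ⁅e, f⁆ = h) (s : L) (hs : ⁅h, s⁆ = 0) :
    s ∈ closure {y : L | ∃ φ : L ≃ₗ⁅ℂ⁆ L, φ (s + e) = y} := by
  have haux : ∀ n : ℕ, ∃ φ : L ≃ₗ⁅ℂ⁆ L,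
      φ (s + e) = s + ((Real.exp (-2 * n) : ℝ) : ℂ) • e := by
    intro n
    set c : ℂ := -(n : ℂ) with hc
    set D : L →ₗ[ℂ] L := c • (LieAlgebra.ad ℂ L h) with hDdef
    have hD : ∀ x y : L, D ⁅x, y⁆ = ⁅D x, y⁆ + ⁅x, D y⁆ := by
      intro x y
      simp only [hDdef, LinearMap.smul_apply, LieAlgebra.ad_apply]
      rw [leibniz_lie, smul_add, smul_lie, lie_smul]
    have hDs : D s = 0 := by
      simp [hDdef, LieAlgebra.ad_apply, hs]
    have hDe : D e = (2 * c) • e := by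
      simp [hDdef, LieAlgebra.ad_apply, hhe, smul_smul, mul_comm]
    obtain ⟨φ, h1, h2⟩ := aux_exp_deriv D hD s e hDs (2 * c) hDe
    refine ⟨φ, ?_⟩
    have hadd : φ (s + e) = φ s + φ e := φ.toLinearEquiv.map_add s e
    rw [hadd, h1, h2]
    congr 2
    rw [show (2 * c) = ((-2 * n : ℝ) : ℂ) by push_cast [hc]; ring, Complex.ofReal_exp]
  have ha : Filter.Tendsto (fun n : ℕ => ((Real.exp (-2 * n) : ℝ) : ℂ)) Filter.atTop (nhds 0) := by
    have hr : Filter.Tendsto (fun n : ℕ => Real.exp (-2 * n)) Filter.atTop (nhds 0) := by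
      have hrw : ∀ n : ℕ, Real.exp (-2 * n) = (Real.exp (-2)) ^ n := by
        intro n
        rw [← Real.exp_nat_mul]
        ring_nf
      simp only [hrw]
      exact tendsto_pow_atTop_nhds_zero_of_lt_one (Real.exp_nonneg _)
        (Real.exp_lt_one_iff.mpr (by norm_num))
    have := (Complex.continuous_ofReal.tendsto 0).comp hr
    simpa only [Function.comp_def, Complex.ofReal_zero] using this
  have htend : Filter.Tendsto (fun n : ℕ => s + ((Real.exp (-2 * n) : ℝ) : ℂ) • e)
      Filter.atTop (nhds s) := by
    have := Filter.Tendsto.add (tendsto_const_nhds (x := s)) (ha.smul_const e)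
    simpa using this
  exact mem_closure_of_tendsto htend (Filter.Eventually.of_forall fun n => haux n)
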